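/- arXiv:2008.09068 — 2 statements merged into one kernel-verified Lean document; each statement's English description precedes it below -/
import Mathlib

section
/- Let 0 < μ < 1 and let f : ℝ → ℝ be continuously differentiable on [0, ∞) with |f(t)| ≤ C e^{a t} and |f′(t)| ≤ C e^{a t} for all t ≥ 0, for some constants C ≥ 0 and a ≥ 0. Then for every real s > max(a, 0), the Laplace transform of the Caputo fractional derivative satisfies ∫₀^∞ e^{−s t} (D^μ_* f)(t) dt = s^μ f̃(s) − s^{μ−1} f(0), where f̃(s) = ∫₀^∞ e^{−s t} f(t) dt. -/
open MeasureTheory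

/-- Left-sided Riemann–Liouville fractional integral of order `α`. -/
noncomputable def rlIntegral (α : ℝ) (f : ℝ → ℝ) (t : ℝ) : ℝ :=
  (1 / Real.Gamma α) * ∫ τ in (0:ℝ)..t, (t - τ) ^ (α - 1) * f τ

/-- Left-sided Caputo fractional derivative of order `μ ∈ (0,1)`, where `f'` is the
derivative of `f`: `D^μ_* f := J^(1-μ) f'`. -/
noncomputable def caputoDeriv (μ : ℝ) (f' : ℝ → ℝ) (t : ℝ) : ℝ :=
  rlIntegral (1 - μ) f' t

open Set Filter

lemma lc_indicator_shift (h : ℝ → ℝ) (c : ℝ) :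
    (fun u => Set.indicator (Set.Ioi c) h (u + c)) =
      Set.indicator (Set.Ioi (0:ℝ)) (fun u => h (u + c)) := by
  funext u
  simp only [Set.indicator_apply, Set.mem_Ioi, lt_add_iff_pos_left]

lemma lc_integrable_shift_iff (f : ℝ → ℝ) (c : ℝ) :
    Integrable (fun u => f (u + c)) ↔ Integrable f := by
  constructor
  · intro h
    have := h.comp_add_right (-c)
    simpa using this
  · intro h
    exact h.comp_add_right c

lemma lc_shift_integrableOn_iff (h : ℝ → ℝ) (c : ℝ) :
    IntegrableOn h (Set.Ioi c) ↔ IntegrableOn (fun u => h (u + c)) (Set.Ioi (0:ℝ)) := by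
  rw [← integrable_indicator_iff (measurableSet_Ioi (a := c)),
    ← integrable_indicator_iff (measurableSet_Ioi (a := (0:ℝ))),
    ← lc_integrable_shift_iff (Set.indicator (Set.Ioi c) h) c, lc_indicator_shift]

lemma lc_shift_integral (h : ℝ → ℝ) (c : ℝ) :
    ∫ x in Set.Ioi c, h x = ∫ u in Set.Ioi (0:ℝ), h (u + c) := by
  rw [← integral_indicator measurableSet_Ioi, ← integral_indicator measurableSet_Ioi,
    ← MeasureTheory.integral_add_right_eq_self (Set.indicator (Set.Ioi c) h) c,
    lc_indicator_shift]

/-- Integrability of the Gamma-type kernel `u ↦ u^(α-1) * exp (-(s*u))`. -/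
lemma lc_kernel_integrable {α s : ℝ} (hα : 0 < α) (hs : 0 < s) :
    IntegrableOn (fun u : ℝ => u ^ (α - 1) * Real.exp (-(s * u))) (Set.Ioi (0:ℝ)) := by
  have h0 := Real.GammaIntegral_convergent hα
  have h1 : IntegrableOn (fun u : ℝ => Real.exp (-(s * u)) * (s * u) ^ (α - 1))
      (Set.Ioi (0:ℝ)) := by
    have := (integrableOn_Ioi_comp_mul_left_iff
      (fun x : ℝ => Real.exp (-x) * x ^ (α - 1)) 0 hs).2 (by simpa using h0)
    simpa using this
  have h2 : IntegrableOn (fun u : ℝ => s ^ (1 - α) *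
      (Real.exp (-(s * u)) * (s * u) ^ (α - 1))) (Set.Ioi (0:ℝ)) := h1.const_mul _
  apply h2.congr_fun ?_ measurableSet_Ioi
  intro u hu
  have hu0 : (0:ℝ) < u := hu
  dsimp only
  rw [Real.mul_rpow hs.le hu0.le,
    show s ^ (1-α) * (Real.exp (-(s*u)) * (s ^ (α-1) * u ^ (α-1)))
      = (s ^ (1-α) * s ^ (α-1)) * (u ^ (α-1) * Real.exp (-(s*u))) by ring,
    ← Real.rpow_add hs]
  norm_num

/-- Laplace transform rule for the Caputo fractional derivative of order `0 < μ < 1`: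
for `f` continuously differentiable on `[0,∞)` with `f` and `f'` of exponential order
`a ≥ 0`, and `s > max a 0`, `L{D^μ_* f}(s) = s^μ L{f}(s) - s^(μ-1) f(0)`. -/
theorem laplace_caputo (μ : ℝ) (hμ0 : 0 < μ) (hμ1 : μ < 1) (f f' : ℝ → ℝ)
    (hderiv : ∀ x ∈ Set.Ici (0:ℝ), HasDerivWithinAt f (f' x) (Set.Ici (0:ℝ)) x)
    (hcont : ContinuousOn f' (Set.Ici (0:ℝ)))
    (C a : ℝ) (hC : 0 ≤ C) (ha : 0 ≤ a)
    (hfb : ∀ t ≥ (0:ℝ), |f t| ≤ C * Real.exp (a * t))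
    (hf'b : ∀ t ≥ (0:ℝ), |f' t| ≤ C * Real.exp (a * t))
    (s : ℝ) (hs : max a 0 < s) :
    (∫ t in Set.Ioi (0:ℝ), Real.exp (-s * t) * caputoDeriv μ f' t) =
      s ^ μ * (∫ t in Set.Ioi (0:ℝ), Real.exp (-s * t) * f t) - s ^ (μ - 1) * f 0 := by
  have hs0 : 0 < s := lt_of_le_of_lt (le_max_right a 0) hs
  have hsa : a < s := lt_of_le_of_lt (le_max_left a 0) hs
  set α : ℝ := 1 - μ with hαdef
  have hα0 : 0 < α := by rw [hαdef]; linarith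
  -- continuous extension of f'
  set g₀ : ℝ → ℝ := fun τ => f' (max τ 0) with hg₀def
  have hg₀c : Continuous g₀ :=
    hcont.comp_continuous (continuous_id.max continuous_const) (fun x => Set.mem_Ici.2 (le_max_right _ _))
  have hg₀eq : ∀ τ ∈ Set.Ioi (0:ℝ), g₀ τ = f' τ := by
    intro τ hτ
    simp [hg₀def, max_eq_left (le_of_lt (Set.mem_Ioi.1 hτ))]
  have hfc : ContinuousOn f (Set.Ici 0) := fun x hx => (hderiv x hx).continuousWithinAt
  -- exponential bound integrable
  have expint : IntegrableOn (fun t : ℝ => C * Real.exp ((a - s) * t)) (Set.Ioi (0:ℝ)) := by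
    have h : IntegrableOn (fun x : ℝ => C * Real.exp (-(s - a) * x)) (Set.Ioi (0:ℝ)) :=
      (exp_neg_integrableOn_Ioi 0 (show (0:ℝ) < s - a by linarith)).const_mul C
    apply h.congr_fun ?_ measurableSet_Ioi
    intro t _
    dsimp only
    rw [show (a - s) * t = -(s - a) * t by ring]
  have expmul : ∀ t : ℝ, Real.exp (-s * t) * (C * Real.exp (a * t))
      = C * Real.exp ((a - s) * t) := by
    intro t
    rw [show (a - s) * t = -s * t + a * t by ring, Real.exp_add]
    ring
  -- integrability of e^{-st} f and e^{-st} f'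
  have boundlem : ∀ (h : ℝ → ℝ), (∀ t ≥ (0:ℝ), |h t| ≤ C * Real.exp (a * t)) →
      (ContinuousOn h (Set.Ici 0)) →
      IntegrableOn (fun t : ℝ => Real.exp (-s * t) * h t) (Set.Ioi (0:ℝ)) := by
    intro h hb hc
    apply Integrable.mono' expint
    · exact ((Real.continuous_exp.comp (continuous_const.mul continuous_id)).continuousOn.mul
        (hc.mono Set.Ioi_subset_Ici_self)).aestronglyMeasurable measurableSet_Ioi
    · filter_upwards [ae_restrict_mem measurableSet_Ioi] with t ht
      have ht0 : (0:ℝ) < t := ht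
      calc ‖Real.exp (-s * t) * h t‖ = Real.exp (-s * t) * |h t| := by
            rw [Real.norm_eq_abs, abs_mul, abs_of_pos (Real.exp_pos _)]
        _ ≤ Real.exp (-s * t) * (C * Real.exp (a * t)) :=
            mul_le_mul_of_nonneg_left (hb t ht0.le) (Real.exp_pos _).le
        _ = C * Real.exp ((a - s) * t) := expmul t
  have int_f := boundlem f hfb hfc
  have int_g := boundlem f' hf'b hcont
  -- Laplace transform of the derivative
  have hL : ∫ t in Set.Ioi (0:ℝ), Real.exp (-s * t) * f' t =
      s * (∫ t in Set.Ioi (0:ℝ), Real.exp (-s * t) * f t) - f 0 := by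
    have hF'int : IntegrableOn
        (fun t : ℝ => Real.exp (-s * t) * f' t - s * (Real.exp (-s * t) * f t))
        (Set.Ioi (0:ℝ)) := int_g.sub (int_f.const_mul s)
    have hderivG : ∀ x ∈ Set.Ioi (0:ℝ), HasDerivAt (fun t => Real.exp (-s * t) * f t)
        (Real.exp (-s * x) * f' x - s * (Real.exp (-s * x) * f x)) x := by
      intro x hx
      have hx0 : (0:ℝ) < x := hx
      have hfx : HasDerivAt f (f' x) x :=
        (hderiv x hx0.le).hasDerivAt (Ici_mem_nhds hx0)
      have he : HasDerivAt (fun t : ℝ => Real.exp (-s * t)) (Real.exp (-s * x) * -s) x := by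
        have h1 : HasDerivAt (fun t : ℝ => -s * t) (-s) x := by
          simpa using (hasDerivAt_id x).const_mul (-s)
        simpa using h1.exp
      have := he.mul hfx
      convert this using 1
      · rfl
      · rfl
      · rfl
      · ring
    have hGcont : ContinuousWithinAt (fun t => Real.exp (-s * t) * f t) (Set.Ici 0) 0 :=
      ((Real.continuous_exp.comp (continuous_const.mul continuous_id)).continuousWithinAt).mul
        (hfc 0 Set.self_mem_Ici)
    have hGtop : Tendsto (fun t => Real.exp (-s * t) * f t) atTop (nhds 0) := by
      apply squeeze_zero_norm' (a := fun t => C * Real.exp ((a - s) * t))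
      · filter_upwards [Filter.eventually_ge_atTop (0:ℝ)] with t ht
        calc ‖Real.exp (-s * t) * f t‖ = Real.exp (-s * t) * |f t| := by
              rw [Real.norm_eq_abs, abs_mul, abs_of_pos (Real.exp_pos _)]
          _ ≤ Real.exp (-s * t) * (C * Real.exp (a * t)) :=
              mul_le_mul_of_nonneg_left (hfb t ht) (Real.exp_pos _).le
          _ = C * Real.exp ((a - s) * t) := expmul t
      · have h1 : Tendsto (fun t : ℝ => (s - a) * t) atTop atTop :=
          Tendsto.const_mul_atTop (by linarith) tendsto_id
        have h2 := Real.tendsto_exp_neg_atTop_nhds_zero.comp h1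
        have h3 : (fun t : ℝ => Real.exp ((a - s) * t))
            = (fun x : ℝ => Real.exp (-x)) ∘ (fun t : ℝ => (s - a) * t) := by
          funext t
          simp only [Function.comp_apply]
          congr 1
          ring
        rw [show (0:ℝ) = C * 0 by ring]
        exact Tendsto.const_mul C (by rw [h3]; exact h2)
    have hFTC := integral_Ioi_of_hasDerivAt_of_tendsto hGcont hderivG hF'int hGtop
    simp only [mul_zero, Real.exp_zero, one_mul] at hFTC
    have h2 := integral_sub int_g (int_f.const_mul s)
    rw [hFTC, integral_const_mul] at h2
    linarith [h2]
  -- Gamma kernel value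
  set K : ℝ := (1 / s) ^ α * Real.Gamma α with hKdef
  have kval : ∫ u in Set.Ioi (0:ℝ), u ^ (α - 1) * Real.exp (-(s * u)) = K :=
    Real.integral_rpow_mul_exp_neg_mul_Ioi hα0 hs0
  have kint := lc_kernel_integrable hα0 hs0
  -- tail kernel for each τ
  have tail_shift : ∀ τ : ℝ, (fun u => Real.exp (-s * (u + τ)) * (u + τ - τ) ^ (α - 1))
      = fun u => Real.exp (-s * τ) * (u ^ (α - 1) * Real.exp (-(s * u))) := by
    intro τ
    funext u
    rw [add_sub_cancel_right, show -s * (u + τ) = -(s * u) + -s * τ by ring, Real.exp_add]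
    ring
  have tail_int : ∀ τ : ℝ, IntegrableOn
      (fun t : ℝ => Real.exp (-s * t) * (t - τ) ^ (α - 1)) (Set.Ioi τ) := by
    intro τ
    rw [lc_shift_integrableOn_iff]
    have : (fun u => (fun t : ℝ => Real.exp (-s * t) * (t - τ) ^ (α - 1)) (u + τ))
        = fun u => Real.exp (-s * τ) * (u ^ (α - 1) * Real.exp (-(s * u))) := tail_shift τ
    rw [this]
    exact kint.const_mul _
  have tail_eq : ∀ τ : ℝ, ∫ t in Set.Ioi τ, Real.exp (-s * t) * (t - τ) ^ (α - 1)
      = Real.exp (-s * τ) * K := by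
    intro τ
    rw [lc_shift_integral]
    have : (fun u => (fun t : ℝ => Real.exp (-s * t) * (t - τ) ^ (α - 1)) (u + τ))
        = fun u => Real.exp (-s * τ) * (u ^ (α - 1) * Real.exp (-(s * u))) := tail_shift τ
    rw [this, integral_const_mul, kval]
  -- Fubini setup
  set B : ℝ × ℝ → ℝ := fun p => Real.exp (-s * p.2) * (p.2 - p.1) ^ (α - 1) * g₀ p.1
    with hBdef
  set T : Set (ℝ × ℝ) := {p | p.1 < p.2} with hTdef
  set F : ℝ → ℝ → ℝ := fun τ t => T.indicator B (τ, t) with hFdef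
  have hTmeas : MeasurableSet T := measurableSet_lt measurable_fst measurable_snd
  have hBmeas : Measurable B := by
    apply Measurable.mul
    apply Measurable.mul
    · fun_prop
    · fun_prop
    · exact (hg₀c.comp continuous_fst).measurable
  have huncurry : Function.uncurry F = T.indicator B := by
    funext p
    simp [hFdef, Function.uncurry]
  have hmeasF : AEStronglyMeasurable (Function.uncurry F)
      ((volume.restrict (Set.Ioi (0:ℝ))).prod (volume.restrict (Set.Ioi (0:ℝ)))) := by
    rw [huncurry]
    exact (hBmeas.indicator hTmeas).aestronglyMeasurable
  have hFpt : ∀ τ t : ℝ, F τ t = Set.indicator (Set.Ioi τ)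
      (fun t' => Real.exp (-s * t') * (t' - τ) ^ (α - 1) * g₀ τ) t := by
    intro τ t
    show T.indicator B (τ, t) = _
    by_cases h : τ < t
    · rw [Set.indicator_of_mem (show (τ, t) ∈ T from h),
        Set.indicator_of_mem (Set.mem_Ioi.2 h)]
    · rw [Set.indicator_of_notMem (show (τ, t) ∉ T from h),
        Set.indicator_of_notMem (fun hh => h (Set.mem_Ioi.1 hh))]
  have hFpt' : ∀ τ t : ℝ, F τ t = Set.indicator (Set.Iio t)
      (fun τ' => Real.exp (-s * t) * (t - τ') ^ (α - 1) * g₀ τ') τ := by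
    intro τ t
    show T.indicator B (τ, t) = _
    by_cases h : τ < t
    · rw [Set.indicator_of_mem (show (τ, t) ∈ T from h),
        Set.indicator_of_mem (Set.mem_Iio.2 h)]
    · rw [Set.indicator_of_notMem (show (τ, t) ∉ T from h),
        Set.indicator_of_notMem (fun hh => h (Set.mem_Iio.1 hh))]
  -- slices in t are integrable
  have slice_int : ∀ τ ∈ Set.Ioi (0:ℝ),
      Integrable (fun t => F τ t) (volume.restrict (Set.Ioi (0:ℝ))) := by
    intro τ hτ
    have h0 : Integrable (Set.indicator (Set.Ioi τ)
        (fun t' => Real.exp (-s * t') * (t' - τ) ^ (α - 1) * g₀ τ))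
        (volume.restrict (Set.Ioi (0:ℝ))) :=
      (integrable_indicator_iff measurableSet_Ioi).2
        (((tail_int τ).mul_const _).mono_measure
          (Measure.restrict_mono (le_refl _) Measure.restrict_le_self))
    exact h0.congr (Filter.Eventually.of_forall fun t => (hFpt τ t).symm)
  -- norm integral of slices
  have slice_norm : ∀ τ ∈ Set.Ioi (0:ℝ),
      (∫ t in Set.Ioi (0:ℝ), ‖F τ t‖) = |g₀ τ| * (Real.exp (-s * τ) * K) := by
    intro τ hτ
    have hτ0 : (0:ℝ) < τ := hτ
    have h2 : ∀ t ∈ Set.Ioi τ, ‖Real.exp (-s * t) * (t - τ) ^ (α - 1) * g₀ τ‖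
        = (Real.exp (-s * t) * (t - τ) ^ (α - 1)) * |g₀ τ| := by
      intro t ht
      have htτ : τ < t := ht
      rw [Real.norm_eq_abs, abs_mul, abs_mul, abs_of_pos (Real.exp_pos _),
        abs_of_nonneg (Real.rpow_nonneg (by linarith) _)]
    calc (∫ t in Set.Ioi (0:ℝ), ‖F τ t‖)
        = ∫ t, Set.indicator (Set.Ioi τ)
            (fun t' => ‖Real.exp (-s * t') * (t' - τ) ^ (α - 1) * g₀ τ‖) t
            ∂(volume.restrict (Set.Ioi (0:ℝ))) := by
          refine integral_congr_ae (Filter.Eventually.of_forall fun t => ?_)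
          show ‖F τ t‖ = _
          rw [hFpt τ t]
          exact norm_indicator_eq_indicator_norm _ _
      _ = ∫ t in Set.Ioi τ, ‖Real.exp (-s * t) * (t - τ) ^ (α - 1) * g₀ τ‖
            ∂(volume.restrict (Set.Ioi (0:ℝ))) := integral_indicator measurableSet_Ioi
      _ = ∫ t in Set.Ioi τ ∩ Set.Ioi 0, ‖Real.exp (-s * t) * (t - τ) ^ (α - 1) * g₀ τ‖ := by
          rw [Measure.restrict_restrict measurableSet_Ioi]
      _ = ∫ t in Set.Ioi τ, ‖Real.exp (-s * t) * (t - τ) ^ (α - 1) * g₀ τ‖ := by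
          rw [Set.Ioi_inter_Ioi, max_eq_left hτ0.le]
      _ = ∫ t in Set.Ioi τ, (Real.exp (-s * t) * (t - τ) ^ (α - 1)) * |g₀ τ| :=
          setIntegral_congr_fun measurableSet_Ioi h2
      _ = (∫ t in Set.Ioi τ, Real.exp (-s * t) * (t - τ) ^ (α - 1)) * |g₀ τ| :=
          integral_mul_const _ _
      _ = |g₀ τ| * (Real.exp (-s * τ) * K) := by rw [tail_eq τ]; ring
  -- slice norms are integrable
  have slice_norm_int : Integrable (fun τ => ∫ t in Set.Ioi (0:ℝ), ‖F τ t‖)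
      (volume.restrict (Set.Ioi (0:ℝ))) := by
    have hKnn : 0 ≤ K := by
      rw [hKdef]
      exact mul_nonneg (Real.rpow_nonneg (by positivity) _) (Real.Gamma_pos_of_pos hα0).le
    have base : IntegrableOn (fun τ : ℝ => |g₀ τ| * (Real.exp (-s * τ) * K))
        (Set.Ioi (0:ℝ)) := by
      apply Integrable.mono' (expint.mul_const K)
      · exact ((hg₀c.abs.mul ((Real.continuous_exp.comp
          (continuous_const.mul continuous_id)).mul continuous_const)).aestronglyMeasurable).restrict
      · filter_upwards [ae_restrict_mem measurableSet_Ioi] with τ hτ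
        have hτ0 : (0:ℝ) < τ := hτ
        have hg : |g₀ τ| ≤ C * Real.exp (a * τ) := by
          rw [hg₀eq τ hτ]
          exact hf'b τ hτ0.le
        have hnorm : ‖|g₀ τ| * (Real.exp (-s * τ) * K)‖
            = |g₀ τ| * (Real.exp (-s * τ) * K) := by
          rw [Real.norm_eq_abs, abs_of_nonneg]
          positivity
        rw [hnorm]
        calc |g₀ τ| * (Real.exp (-s * τ) * K)
            ≤ (C * Real.exp (a * τ)) * (Real.exp (-s * τ) * K) := by
              apply mul_le_mul_of_nonneg_right hg
              positivity
          _ = (Real.exp (-s * τ) * (C * Real.exp (a * τ))) * K := by ring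
          _ = C * Real.exp ((a - s) * τ) * K := by rw [expmul τ]
    apply base.congr
    filter_upwards [ae_restrict_mem measurableSet_Ioi] with τ hτ
    exact (slice_norm τ hτ).symm
  -- Fubini
  have hFint : Integrable (Function.uncurry F)
      ((volume.restrict (Set.Ioi (0:ℝ))).prod (volume.restrict (Set.Ioi (0:ℝ)))) := by
    rw [integrable_prod_iff hmeasF]
    constructor
    · filter_upwards [ae_restrict_mem measurableSet_Ioi] with τ hτ
      exact slice_int τ hτ
    · exact slice_norm_int
  have hswap := integral_integral_swap hFint
  -- compute the τ-then-t side
  have left_side : (∫ τ in Set.Ioi (0:ℝ), ∫ t in Set.Ioi (0:ℝ), F τ t)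
      = K * ∫ τ in Set.Ioi (0:ℝ), Real.exp (-s * τ) * f' τ := by
    rw [← integral_const_mul]
    apply setIntegral_congr_fun measurableSet_Ioi
    intro τ hτ
    have hτ0 : (0:ℝ) < τ := hτ
    have h2 : ∀ t ∈ Set.Ioi τ, Real.exp (-s * t) * (t - τ) ^ (α - 1) * g₀ τ
        = (Real.exp (-s * t) * (t - τ) ^ (α - 1)) * g₀ τ := fun t _ => by ring
    calc (∫ t in Set.Ioi (0:ℝ), F τ t)
        = ∫ t, Set.indicator (Set.Ioi τ)
            (fun t' => Real.exp (-s * t') * (t' - τ) ^ (α - 1) * g₀ τ) t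
            ∂(volume.restrict (Set.Ioi (0:ℝ))) :=
          integral_congr_ae (Filter.Eventually.of_forall fun t => hFpt τ t)
      _ = ∫ t in Set.Ioi τ, Real.exp (-s * t) * (t - τ) ^ (α - 1) * g₀ τ
            ∂(volume.restrict (Set.Ioi (0:ℝ))) := integral_indicator measurableSet_Ioi
      _ = ∫ t in Set.Ioi τ ∩ Set.Ioi 0, Real.exp (-s * t) * (t - τ) ^ (α - 1) * g₀ τ := by
          rw [Measure.restrict_restrict measurableSet_Ioi]
      _ = ∫ t in Set.Ioi τ, Real.exp (-s * t) * (t - τ) ^ (α - 1) * g₀ τ := by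
          rw [Set.Ioi_inter_Ioi, max_eq_left hτ0.le]
      _ = (∫ t in Set.Ioi τ, Real.exp (-s * t) * (t - τ) ^ (α - 1)) * g₀ τ := by
          rw [setIntegral_congr_fun measurableSet_Ioi h2, integral_mul_const]
      _ = K * (Real.exp (-s * τ) * f' τ) := by rw [tail_eq τ, hg₀eq τ hτ]; ring
  -- compute the t-then-τ side
  have right_side : (∫ t in Set.Ioi (0:ℝ), ∫ τ in Set.Ioi (0:ℝ), F τ t)
      = ∫ t in Set.Ioi (0:ℝ), Real.exp (-s * t) *
          ∫ τ in (0:ℝ)..t, (t - τ) ^ (α - 1) * f' τ := by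
    apply setIntegral_congr_fun measurableSet_Ioi
    intro t ht
    dsimp only
    have ht0 : (0:ℝ) < t := ht
    have hset : Set.Iio t ∩ Set.Ioi (0:ℝ) = Set.Ioo 0 t := by
      rw [Set.inter_comm, Set.Ioi_inter_Iio]
    have hrhs : Real.exp (-s * t) * ∫ τ in (0:ℝ)..t, (t - τ) ^ (α - 1) * f' τ
        = ∫ τ in Set.Ioo (0:ℝ) t, Real.exp (-s * t) * ((t - τ) ^ (α - 1) * f' τ) := by
      rw [intervalIntegral.integral_of_le ht0.le, integral_Ioc_eq_integral_Ioo,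
        ← integral_const_mul]
    rw [hrhs]
    calc (∫ τ in Set.Ioi (0:ℝ), F τ t)
        = ∫ τ, Set.indicator (Set.Iio t)
            (fun τ' => Real.exp (-s * t) * (t - τ') ^ (α - 1) * g₀ τ') τ
            ∂(volume.restrict (Set.Ioi (0:ℝ))) :=
          integral_congr_ae (Filter.Eventually.of_forall fun τ => hFpt' τ t)
      _ = ∫ τ in Set.Iio t, Real.exp (-s * t) * (t - τ) ^ (α - 1) * g₀ τ
            ∂(volume.restrict (Set.Ioi (0:ℝ))) := integral_indicator measurableSet_Iio
      _ = ∫ τ in Set.Iio t ∩ Set.Ioi 0, Real.exp (-s * t) * (t - τ) ^ (α - 1) * g₀ τ := by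
          rw [Measure.restrict_restrict measurableSet_Iio]
      _ = ∫ τ in Set.Ioo (0:ℝ) t, Real.exp (-s * t) * (t - τ) ^ (α - 1) * g₀ τ := by
          rw [hset]
      _ = ∫ τ in Set.Ioo (0:ℝ) t, Real.exp (-s * t) * ((t - τ) ^ (α - 1) * f' τ) := by
          apply setIntegral_congr_fun measurableSet_Ioo
          intro τ hτ
          dsimp only
          rw [hg₀eq τ hτ.1]
          ring
  -- put it together
  have main : (∫ t in Set.Ioi (0:ℝ), Real.exp (-s * t) *
      ∫ τ in (0:ℝ)..t, (t - τ) ^ (α - 1) * f' τ)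
      = K * (s * (∫ t in Set.Ioi (0:ℝ), Real.exp (-s * t) * f t) - f 0) := by
    rw [← right_side, ← hswap, left_side, hL]
  -- unfold caputoDeriv and finish
  have unfold1 : (∫ t in Set.Ioi (0:ℝ), Real.exp (-s * t) * caputoDeriv μ f' t)
      = (1 / Real.Gamma α) * ∫ t in Set.Ioi (0:ℝ), Real.exp (-s * t) *
          ∫ τ in (0:ℝ)..t, (t - τ) ^ (α - 1) * f' τ := by
    rw [← integral_const_mul]
    apply setIntegral_congr_fun measurableSet_Ioi
    intro t _
    simp only [caputoDeriv, rlIntegral, ← hαdef]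
    ring
  rw [unfold1, main]
  have h1 : (1 / Real.Gamma α) * K = s ^ (μ - 1) := by
    rw [hKdef]
    have hΓ : Real.Gamma α ≠ 0 := (Real.Gamma_pos_of_pos hα0).ne'
    rw [show (1 / Real.Gamma α) * ((1 / s) ^ α * Real.Gamma α)
        = (1 / s) ^ α * (Real.Gamma α / Real.Gamma α) by ring, div_self hΓ, mul_one,
      one_div, Real.inv_rpow hs0.le, ← Real.rpow_neg hs0.le]
    congr 1
    rw [hαdef]; ring
  have h2 : s ^ (μ - 1) * s = s ^ μ := by
    rw [← Real.rpow_add_one hs0.ne' (μ - 1)]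
    norm_num
  rw [show (1 / Real.Gamma α) * (K * (s * (∫ t in Set.Ioi (0:ℝ),
      Real.exp (-s * t) * f t) - f 0))
      = ((1 / Real.Gamma α) * K) * s * (∫ t in Set.Ioi (0:ℝ), Real.exp (-s * t) * f t)
        - ((1 / Real.Gamma α) * K) * f 0 by ring, h1, h2]
end

section
/- Let u > 0, let ω_m, ω_f, ω_v, κ_m, κ_f, κ_v, λ_mf, λ_mv, λ_fv, β_m, β_f, β_v be real numbers, and define m₁ := u^{β_m} ω_m + λ_mf + λ_mv, m₂ := λ_mf, m₃ := λ_mv, m₄ := u^{β_f} ω_f + λ_mf + λ_fv, m₅ := λ_fv, m₆ := u^{β_v} ω_v + λ_mv + λ_fv. For i = 1, 2, 3, let α_i ∈ ℝ, let (A_i, B_i, C_i) ∈ ℝ³ satisfy M(α_i)·(A_i, B_i, C_i)ᵀ = 0 where M(α) has rows (κ_m α² − m₁, m₂, m₃), (m₂, κ_f α² − m₄, m₅), (m₃, m₅, κ_v α² − m₆), let D_i ∈ ℝ, and let q_i : (0, ∞) → ℝ be twice differentiable with (1/r)·d/dr( r·q_i′(r) ) = α_i² q_i(r) for all r > 0.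 Then the functions p̄_m := Σᵢ A_i D_i q_i, p̄_f := Σᵢ B_i D_i q_i, p̄_v := Σᵢ C_i D_i q_i satisfy, for all r > 0: ω_m u^{β_m} p̄_m = κ_m (1/r) d/dr(r p̄_m′) + λ_mf (p̄_f − p̄_m) + λ_mv (p̄_v − p̄_m); ω_f u^{β_f} p̄_f = κ_f (1/r) d/dr(r p̄_f′) − λ_mf (p̄_f − p̄_m) + λ_fv (p̄_v − p̄_f); and ω_v u^{β_v} p̄_v = κ_v (1/r) d/dr(r p̄_v′) − λ_mv (p̄_v − p̄_m) − λ_fv (p̄_v − p̄_f). -/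
lemma bessel_superpose (α : Fin 3 → ℝ) (q : Fin 3 → ℝ → ℝ)
    (hq1 : ∀ i : Fin 3, ∀ r > (0:ℝ), DifferentiableAt ℝ (q i) r)
    (hq2 : ∀ i : Fin 3, ∀ r > (0:ℝ), DifferentiableAt ℝ (deriv (q i)) r)
    (hq : ∀ i : Fin 3, ∀ r > (0:ℝ),
      (1 / r) * deriv (fun s => s * deriv (q i) s) r = (α i) ^ 2 * q i r)
    (E : Fin 3 → ℝ) (r : ℝ) (hr : 0 < r) :
    (1 / r) * deriv (fun s => s * deriv (fun s' => ∑ i, E i * q i s') s) r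
      = ∑ i, E i * ((α i) ^ 2 * q i r) := by
  have hev : (fun s => s * deriv (fun s' => ∑ i, E i * q i s') s)
      =ᶠ[nhds r] (fun s => ∑ i, E i * (s * deriv (q i) s)) := by
    filter_upwards [Ioi_mem_nhds hr] with s hs
    have hd : deriv (fun s' => ∑ i, E i * q i s') s = ∑ i, E i * deriv (q i) s := by
      rw [deriv_fun_sum (fun i _ => ((hq1 i s hs).const_mul (E i)))]
      exact Finset.sum_congr rfl fun i _ => deriv_const_mul _ (hq1 i s hs)
    rw [hd, Finset.mul_sum]
    exact Finset.sum_congr rfl fun i _ => by ring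
  rw [hev.deriv_eq]
  have hd2 : deriv (fun s => ∑ i, E i * (s * deriv (q i) s)) r
      = ∑ i, E i * deriv (fun s => s * deriv (q i) s) r := by
    rw [deriv_fun_sum (fun i _ =>
      ((differentiableAt_fun_id.fun_mul (hq2 i r hr)).const_mul (E i)))]
    exact Finset.sum_congr rfl fun i _ =>
      deriv_const_mul _ (differentiableAt_fun_id.fun_mul (hq2 i r hr))
  rw [hd2, Finset.mul_sum]
  refine Finset.sum_congr rfl fun i _ => ?_
  have hrne : r ≠ 0 := ne_of_gt hr
  have hD : deriv (fun s => s * deriv (q i) s) r = r * ((α i) ^ 2 * q i r) := by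
    have h := hq i r hr
    field_simp at h
    linarith
  rw [hD]
  field_simp


/-- Superposition of Bessel modes solves the Laplace-transformed dimensionless
triple-porosity triple-permeability flow system with Caputo fractional orders
`βm, βf, βv`: if each `(Aᵢ, Bᵢ, Cᵢ)` lies in the kernel of `M(αᵢ)` and each `qᵢ`
satisfies `(1/r) d/dr (r qᵢ′) = αᵢ² qᵢ` on `(0,∞)`, then
`p̄m = Σ Aᵢ Dᵢ qᵢ`, `p̄f = Σ Bᵢ Dᵢ qᵢ`, `p̄v = Σ Cᵢ Dᵢ qᵢ` satisfy the three coupled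
equations. -/
theorem triple_porosity_superposition (u : ℝ) (hu : 0 < u)
    (ωm ωf ωv κm κf κv lmf lmv lfv βm βf βv : ℝ)
    (m1 m2 m3 m4 m5 m6 : ℝ)
    (hm1 : m1 = u ^ βm * ωm + lmf + lmv)
    (hm2 : m2 = lmf)
    (hm3 : m3 = lmv)
    (hm4 : m4 = u ^ βf * ωf + lmf + lfv)
    (hm5 : m5 = lfv)
    (hm6 : m6 = u ^ βv * ωv + lmv + lfv)
    (α : Fin 3 → ℝ) (A B C D : Fin 3 → ℝ) (q : Fin 3 → ℝ → ℝ)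
    (hker : ∀ i : Fin 3,
      (!![κm * (α i) ^ 2 - m1, m2, m3;
          m2, κf * (α i) ^ 2 - m4, m5;
          m3, m5, κv * (α i) ^ 2 - m6] : Matrix (Fin 3) (Fin 3) ℝ).mulVec
        ![A i, B i, C i] = 0)
    (hq1 : ∀ i : Fin 3, ∀ r > (0:ℝ), DifferentiableAt ℝ (q i) r)
    (hq2 : ∀ i : Fin 3, ∀ r > (0:ℝ), DifferentiableAt ℝ (deriv (q i)) r)
    (hq : ∀ i : Fin 3, ∀ r > (0:ℝ),
      (1 / r) * deriv (fun s => s * deriv (q i) s) r = (α i) ^ 2 * q i r) :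
    ∀ r > (0:ℝ),
      (ωm * u ^ βm * (∑ i, A i * D i * q i r) =
        κm * ((1 / r) * deriv (fun s => s * deriv (fun s' => ∑ i, A i * D i * q i s') s) r)
          + lmf * ((∑ i, B i * D i * q i r) - (∑ i, A i * D i * q i r))
          + lmv * ((∑ i, C i * D i * q i r) - (∑ i, A i * D i * q i r))) ∧
      (ωf * u ^ βf * (∑ i, B i * D i * q i r) =
        κf * ((1 / r) * deriv (fun s => s * deriv (fun s' => ∑ i, B i * D i * q i s') s) r)
          - lmf * ((∑ i, B i * D i * q i r) - (∑ i, A i * D i * q i r))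
          + lfv * ((∑ i, C i * D i * q i r) - (∑ i, B i * D i * q i r))) ∧
      (ωv * u ^ βv * (∑ i, C i * D i * q i r) =
        κv * ((1 / r) * deriv (fun s => s * deriv (fun s' => ∑ i, C i * D i * q i s') s) r)
          - lmv * ((∑ i, C i * D i * q i r) - (∑ i, A i * D i * q i r))
          - lfv * ((∑ i, C i * D i * q i r) - (∑ i, B i * D i * q i r))) := by
  intro r hr
  have hA := bessel_superpose α q hq1 hq2 hq (fun i => A i * D i) r hr
  have hB := bessel_superpose α q hq1 hq2 hq (fun i => B i * D i) r hr
  have hC := bessel_superpose α q hq1 hq2 hq (fun i => C i * D i) r hr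
  have e0 : ∀ i : Fin 3,
      (κm * (α i) ^ 2 - m1) * A i + m2 * B i + m3 * C i = 0 := by
    intro i
    have := congrFun (hker i) 0
    simpa [Matrix.mulVec, dotProduct, Fin.sum_univ_three, add_assoc] using this
  have e1 : ∀ i : Fin 3,
      m2 * A i + (κf * (α i) ^ 2 - m4) * B i + m5 * C i = 0 := by
    intro i
    have := congrFun (hker i) 1
    simpa [Matrix.mulVec, dotProduct, Fin.sum_univ_three, add_assoc] using this
  have e2 : ∀ i : Fin 3,
      m3 * A i + m5 * B i + (κv * (α i) ^ 2 - m6) * C i = 0 := by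
    intro i
    have := congrFun (hker i) 2
    simpa [Matrix.mulVec, dotProduct, Fin.sum_univ_three, add_assoc] using this
  refine ⟨?_, ?_, ?_⟩
  · rw [hA]
    simp only [Fin.sum_univ_three]
    linear_combination (-(D 0 * q 0 r)) * e0 0 + (-(D 1 * q 1 r)) * e0 1 +
      (-(D 2 * q 2 r)) * e0 2 +
      (-(A 0 * D 0 * q 0 r) - A 1 * D 1 * q 1 r - A 2 * D 2 * q 2 r) * hm1 +
      (B 0 * D 0 * q 0 r + B 1 * D 1 * q 1 r + B 2 * D 2 * q 2 r) * hm2 +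
      (C 0 * D 0 * q 0 r + C 1 * D 1 * q 1 r + C 2 * D 2 * q 2 r) * hm3
  · rw [hB]
    simp only [Fin.sum_univ_three]
    linear_combination (-(D 0 * q 0 r)) * e1 0 + (-(D 1 * q 1 r)) * e1 1 +
      (-(D 2 * q 2 r)) * e1 2 +
      (A 0 * D 0 * q 0 r + A 1 * D 1 * q 1 r + A 2 * D 2 * q 2 r) * hm2 +
      (-(B 0 * D 0 * q 0 r) - B 1 * D 1 * q 1 r - B 2 * D 2 * q 2 r) * hm4 +
      (C 0 * D 0 * q 0 r + C 1 * D 1 * q 1 r + C 2 * D 2 * q 2 r) * hm5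
  · rw [hC]
    simp only [Fin.sum_univ_three]
    linear_combination (-(D 0 * q 0 r)) * e2 0 + (-(D 1 * q 1 r)) * e2 1 +
      (-(D 2 * q 2 r)) * e2 2 +
      (A 0 * D 0 * q 0 r + A 1 * D 1 * q 1 r + A 2 * D 2 * q 2 r) * hm3 +
      (B 0 * D 0 * q 0 r + B 1 * D 1 * q 1 r + B 2 * D 2 * q 2 r) * hm5 +
      (-(C 0 * D 0 * q 0 r) - C 1 * D 1 * q 1 r - C 2 * D 2 * q 2 r) * hm6
end
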